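/- The conjugacy growth series of G ≀ C_2 with respect to the generating set {(y⃗, e') : y ∈ Y} ∪ {(e⃗, b)} equals σ(z) + z·σ(z) + (z²/2)·((σ(z)−1)² + σ(z²) − 1), where σ(z) = conjugacy growth series of (G, Y). -/

import Mathlib

section

variable {G : Type*} [Group G]

/-- Word length of `g ∈ G` with respect to a generating set `Y`. -/
noncomputable def wordLen (Y : Set G) (g : G) : ℕ :=
  sInf {n | ∃ w : List G, w.length = n ∧ (∀ x ∈ w, x ∈ Y) ∧ w.prod = g}

/-- Conjugacy length of a conjugacy class of `G`: minimal word length of its elements. -/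
noncomputable def conjLen (Y : Set G) (c : ConjClasses G) : ℕ :=
  sInf {n | ∃ g : G, ConjClasses.mk g = c ∧ wordLen Y g = n}

/-- Number of conjugacy classes of `G` of conjugacy length `m` w.r.t. `Y`. -/
noncomputable def conjCount (Y : Set G) (m : ℕ) : ℕ :=
  Nat.card {c : ConjClasses G // conjLen Y c = m}

/-- Multiplication of `G ≀ C₂ = (G × G) ⋊ C₂`, where the nontrivial element `true` of
`C₂` swaps the two coordinates. -/
def wrC2Mul : ((G × G) × Bool) → ((G × G) × Bool) → ((G × G) × Bool) :=
  fun p q =>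
    (if p.2 then (p.1.1 * q.1.2, p.1.2 * q.1.1) else (p.1.1 * q.1.1, p.1.2 * q.1.2),
      Bool.xor p.2 q.2)

/-- The natural generating set of `G ≀ C₂` built from a generating set `Y` of `G`:
copies of the generators of `G` in the first coordinate, plus the swap generator. -/
def wrC2Gens (Y : Set G) : Set ((G × G) × Bool) :=
  {p | (∃ y ∈ Y, p = ((y, 1), false)) ∨ p = (((1 : G), (1 : G)), true)}

/-- Word length in `G ≀ C₂` w.r.t. the natural generating set. -/
noncomputable def wrC2Len (Y : Set G) (g : (G × G) × Bool) : ℕ :=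
  sInf {n | ∃ w : List ((G × G) × Bool), w.length = n ∧ (∀ x ∈ w, x ∈ wrC2Gens Y) ∧
    w.foldr wrC2Mul (((1 : G), (1 : G)), false) = g}

/-- Conjugacy in `G ≀ C₂`. -/
def wrC2Conj (g h : (G × G) × Bool) : Prop :=
  ∃ x : (G × G) × Bool, wrC2Mul x g = wrC2Mul h x

/-- Conjugacy length in `G ≀ C₂`. -/
noncomputable def wrC2ConjLen (Y : Set G) (g : (G × G) × Bool) : ℕ :=
  sInf {n | ∃ h : (G × G) × Bool, wrC2Conj g h ∧ wrC2Len Y h = n}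

/-- Number of conjugacy classes of `G ≀ C₂` of conjugacy length `m`. -/
noncomputable def wrC2ConjCount (Y : Set G) (m : ℕ) : ℕ :=
  Nat.card {c : Quot (wrC2Conj (G := G)) //
    ∃ g : (G × G) × Bool, Quot.mk wrC2Conj g = c ∧ wrC2ConjLen Y g = m}

end


namespace Stmt16

variable {G : Type*} [Group G] (Y : Set G)

lemma wordLen_le {g : G} {w : List G} (hw : ∀ x ∈ w, x ∈ Y) (hp : w.prod = g) :
    wordLen Y g ≤ w.length :=
  Nat.sInf_le ⟨w, rfl, hw, hp⟩

lemma exists_any_word (hYsymm : ∀ y ∈ Y, y⁻¹ ∈ Y) (hYgen : Subgroup.closure Y = ⊤) (g : G) :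
    ∃ w : List G, (∀ x ∈ w, x ∈ Y) ∧ w.prod = g := by
  have hg : g ∈ Submonoid.closure (Y ∪ Y⁻¹) := by
    have : g ∈ (Subgroup.closure Y).toSubmonoid := by rw [hYgen]; trivial
    rwa [Subgroup.closure_toSubmonoid] at this
  have hUY : Y ∪ Y⁻¹ = Y := by
    apply Set.union_eq_self_of_subset_right
    intro x hx
    have := hYsymm x⁻¹ hx
    simpa using this
  rw [hUY] at hg
  obtain ⟨l, h1, h2⟩ := Submonoid.exists_list_of_mem_closure hg
  exact ⟨l, h1, h2⟩

lemma exists_word (hYsymm : ∀ y ∈ Y, y⁻¹ ∈ Y) (hYgen : Subgroup.closure Y = ⊤) (g : G) :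
    ∃ w : List G, w.length = wordLen Y g ∧ (∀ x ∈ w, x ∈ Y) ∧ w.prod = g := by
  have hne : {n | ∃ w : List G, w.length = n ∧ (∀ x ∈ w, x ∈ Y) ∧ w.prod = g}.Nonempty := by
    obtain ⟨w, hw, hp⟩ := exists_any_word Y hYsymm hYgen g
    exact ⟨w.length, w, rfl, hw, hp⟩
  exact Nat.sInf_mem hne

lemma wordLen_one : wordLen Y (1 : G) = 0 :=
  Nat.le_zero.mp (wordLen_le Y (w := []) (by simp) (by simp))

lemma eq_one_of_wordLen_eq_zero (hYsymm : ∀ y ∈ Y, y⁻¹ ∈ Y) (hYgen : Subgroup.closure Y = ⊤)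
    {g : G} (h : wordLen Y g = 0) : g = 1 := by
  obtain ⟨w, hl, _, hp⟩ := exists_word Y hYsymm hYgen g
  rw [h, List.length_eq_zero_iff] at hl
  rw [← hp, hl, List.prod_nil]

lemma wordLen_mul_le (hYsymm : ∀ y ∈ Y, y⁻¹ ∈ Y) (hYgen : Subgroup.closure Y = ⊤) (g h : G) :
    wordLen Y (g * h) ≤ wordLen Y g + wordLen Y h := by
  obtain ⟨w1, hl1, hw1, hp1⟩ := exists_word Y hYsymm hYgen g
  obtain ⟨w2, hl2, hw2, hp2⟩ := exists_word Y hYsymm hYgen h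
  calc wordLen Y (g * h) ≤ (w1 ++ w2).length := by
        refine wordLen_le Y (fun x hx => ?_) (by simp [hp1, hp2])
        rcases List.mem_append.mp hx with h | h
        exacts [hw1 x h, hw2 x h]
    _ = wordLen Y g + wordLen Y h := by simp [hl1, hl2]

lemma conjLen_le {g : G} {c : ConjClasses G} (h : ConjClasses.mk g = c) :
    conjLen Y c ≤ wordLen Y g :=
  Nat.sInf_le ⟨g, h, rfl⟩

lemma exists_conj_minrep (c : ConjClasses G) :
    ∃ g : G, ConjClasses.mk g = c ∧ wordLen Y g = conjLen Y c := by
  obtain ⟨g, hg⟩ := ConjClasses.exists_rep c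
  apply Nat.sInf_mem (s := {n | ∃ g : G, ConjClasses.mk g = c ∧ wordLen Y g = n})
  exact ⟨wordLen Y g, g, hg, rfl⟩

lemma conjLen_one : conjLen Y (ConjClasses.mk (1 : G)) = 0 :=
  Nat.le_zero.mp ((conjLen_le Y rfl).trans (by rw [wordLen_one]))

lemma conjLen_eq_zero_iff (hYsymm : ∀ y ∈ Y, y⁻¹ ∈ Y) (hYgen : Subgroup.closure Y = ⊤)
    {c : ConjClasses G} : conjLen Y c = 0 ↔ c = ConjClasses.mk (1 : G) := by
  constructor
  · intro h
    obtain ⟨g, hg, hwl⟩ := exists_conj_minrep Y c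
    rw [h] at hwl
    rw [← hg, eq_one_of_wordLen_eq_zero Y hYsymm hYgen hwl]
  · rintro rfl; exact conjLen_one Y

lemma finite_lists (hYfin : Y.Finite) (n : ℕ) :
    {w : List G | w.length = n ∧ ∀ x ∈ w, x ∈ Y}.Finite := by
  induction n with
  | zero =>
      apply Set.Finite.subset (Set.finite_singleton ([] : List G))
      rintro w ⟨hl, -⟩
      simp [List.length_eq_zero_iff.mp hl]
  | succ n ih =>
      have : {w : List G | w.length = n + 1 ∧ ∀ x ∈ w, x ∈ Y} ⊆
          (fun p : G × List G => p.1 :: p.2) '' (Y ×ˢ {w | w.length = n ∧ ∀ x ∈ w, x ∈ Y}) := by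
        rintro w ⟨hl, hw⟩
        cases w with
        | nil => simp at hl
        | cons a l =>
            refine ⟨(a, l), ⟨hw a (by simp), by simp at hl; exact ⟨hl, fun x hx => hw x (by simp [hx])⟩⟩, rfl⟩
      exact Set.Finite.subset (Set.Finite.image _ (Set.Finite.prod hYfin ih)) this

lemma finite_wordLen_eq (hYsymm : ∀ y ∈ Y, y⁻¹ ∈ Y) (hYgen : Subgroup.closure Y = ⊤)
    (hYfin : Y.Finite) (n : ℕ) : {g : G | wordLen Y g = n}.Finite := by
  have : {g : G | wordLen Y g = n} ⊆
      List.prod '' {w : List G | w.length = n ∧ ∀ x ∈ w, x ∈ Y} := by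
    intro g hg
    obtain ⟨w, hl, hw, hp⟩ := exists_word Y hYsymm hYgen g
    exact ⟨w, ⟨by rw [hl]; exact hg, hw⟩, hp⟩
  exact Set.Finite.subset (Set.Finite.image _ (finite_lists Y hYfin n)) this

lemma finite_conjLen_eq (hYsymm : ∀ y ∈ Y, y⁻¹ ∈ Y) (hYgen : Subgroup.closure Y = ⊤)
    (hYfin : Y.Finite) (n : ℕ) : {c : ConjClasses G | conjLen Y c = n}.Finite := by
  have : {c : ConjClasses G | conjLen Y c = n} ⊆
      ConjClasses.mk '' {g : G | wordLen Y g = n} := by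
    intro c hc
    obtain ⟨g, hg, hwl⟩ := exists_conj_minrep Y c
    exact ⟨g, by rw [Set.mem_setOf_eq, hwl]; exact hc, hg⟩
  exact Set.Finite.subset (Set.Finite.image _ (finite_wordLen_eq Y hYsymm hYgen hYfin n)) this


section Alg
variable {G : Type*} [Group G]


@[simp] lemma mul_ff (a b c d : G) (t : Bool) :
    wrC2Mul ((a,b),false) ((c,d),t) = ((a*c, b*d), t) := by
  simp [wrC2Mul]

@[simp] lemma mul_tt (a b c d : G) (t : Bool) :
    wrC2Mul ((a,b),true) ((c,d),t) = ((a*d, b*c), !t) := by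
  simp [wrC2Mul]

lemma wr_assoc (x y z : (G × G) × Bool) :
    wrC2Mul (wrC2Mul x y) z = wrC2Mul x (wrC2Mul y z) := by
  rcases x with ⟨⟨a,b⟩,s⟩; rcases y with ⟨⟨c,d⟩,t⟩; rcases z with ⟨⟨p,q⟩,u⟩
  cases s <;> cases t <;> simp [mul_assoc]

@[simp] lemma e_mul (x : (G × G) × Bool) :
    wrC2Mul (((1:G),(1:G)), false) x = x := by
  rcases x with ⟨⟨a,b⟩,s⟩; simp [wrC2Mul]

@[simp] lemma mul_e (x : (G × G) × Bool) :
    wrC2Mul x (((1:G),(1:G)), false) = x := by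
  rcases x with ⟨⟨a,b⟩,s⟩; cases s <;> simp [wrC2Mul]

lemma conj_cursor {x y : (G × G) × Bool} (h : wrC2Conj x y) : x.2 = y.2 := by
  obtain ⟨z, hz⟩ := h
  have h2 := congrArg (fun p => p.2) hz
  simp only [wrC2Mul] at h2
  revert h2
  cases z.2 <;> cases x.2 <;> cases y.2 <;> simp

lemma conj_false_iff (g h g' h' : G) :
    wrC2Conj ((g,h),false) ((g',h'),false) ↔
      (IsConj g g' ∧ IsConj h h') ∨ (IsConj h g' ∧ IsConj g h') := by
  constructor
  · rintro ⟨⟨⟨a,b⟩,s⟩, hx⟩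
    cases s
    · simp only [mul_ff, Prod.mk.injEq] at hx
      obtain ⟨⟨h1, h2⟩, -⟩ := hx
      exact Or.inl ⟨isConj_iff.mpr ⟨a, by rw [mul_inv_eq_iff_eq_mul, h1]⟩,
        isConj_iff.mpr ⟨b, by rw [mul_inv_eq_iff_eq_mul, h2]⟩⟩
    · simp only [mul_tt, mul_ff, Prod.mk.injEq] at hx
      obtain ⟨⟨h1, h2⟩, -⟩ := hx
      exact Or.inr ⟨isConj_iff.mpr ⟨a, by rw [mul_inv_eq_iff_eq_mul, h1]⟩,
        isConj_iff.mpr ⟨b, by rw [mul_inv_eq_iff_eq_mul, h2]⟩⟩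
  · rintro (⟨hc1, hc2⟩ | ⟨hc1, hc2⟩)
    · obtain ⟨a, ha⟩ := isConj_iff.mp hc1
      obtain ⟨b, hb⟩ := isConj_iff.mp hc2
      refine ⟨((a,b),false), ?_⟩
      simp only [mul_ff, Prod.mk.injEq]
      rw [mul_inv_eq_iff_eq_mul] at ha hb
      simp [ha, hb]
    · obtain ⟨a, ha⟩ := isConj_iff.mp hc1
      obtain ⟨b, hb⟩ := isConj_iff.mp hc2
      refine ⟨((a,b),true), ?_⟩
      simp only [mul_tt, mul_ff, Prod.mk.injEq]
      rw [mul_inv_eq_iff_eq_mul] at ha hb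
      simp [ha, hb]

lemma conj_true_iff (g h g' h' : G) :
    wrC2Conj ((g,h),true) ((g',h'),true) ↔ IsConj (g*h) (g'*h') := by
  constructor
  · rintro ⟨⟨⟨a,b⟩,s⟩, hx⟩
    cases s
    · simp only [mul_ff, mul_tt, Prod.mk.injEq] at hx
      obtain ⟨⟨h1, h2⟩, -⟩ := hx
      refine isConj_iff.mpr ⟨a, ?_⟩
      rw [mul_inv_eq_iff_eq_mul, ← mul_assoc, h1, mul_assoc, h2, ← mul_assoc]
    · simp only [mul_tt, Prod.mk.injEq] at hx
      obtain ⟨⟨h1, h2⟩, -⟩ := hx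
      have key : IsConj (g*h) (h'*g') := by
        refine isConj_iff.mpr ⟨b, ?_⟩
        rw [mul_inv_eq_iff_eq_mul, ← mul_assoc, h2, mul_assoc, h1, ← mul_assoc]
      exact key.trans (isConj_iff.mpr ⟨g', by group⟩)
  · intro hc
    obtain ⟨c, hc⟩ := isConj_iff.mp hc
    rw [mul_inv_eq_iff_eq_mul] at hc
    refine ⟨((c, g'⁻¹ * c * g), false), ?_⟩
    simp only [mul_ff, mul_tt, Prod.mk.injEq]
    refine ⟨⟨by group, ?_⟩, rfl⟩
    have h2 : (g'⁻¹ * c * g) * h = g'⁻¹ * (c * (g * h)) := by group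
    rw [h2, hc]
    group


variable (Y : Set G)


/-- Structure of words in the generators of `G ≀ C₂`. -/
lemma word_structure : ∀ (w : List ((G × G) × Bool)), (∀ x ∈ w, x ∈ wrC2Gens Y) →
    ∃ (u v : List G) (k : ℕ),
      (∀ x ∈ u, x ∈ Y) ∧ (∀ x ∈ v, x ∈ Y) ∧
      u.length + v.length + k = w.length ∧
      w.foldr wrC2Mul (((1:G),(1:G)), false) = ((u.prod, v.prod), decide (k % 2 = 1)) ∧
      (k = 0 → v = []) := by
  intro w
  induction w with
  | nil =>
      intro _
      exact ⟨[], [], 0, by simp, by simp, by simp, by simp, fun _ => rfl⟩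
  | cons x w ih =>
      intro hmem
      obtain ⟨u, v, k, hu, hv, hlen, heval, hk0⟩ := ih (fun y hy => hmem y (List.mem_cons_of_mem _ hy))
      rcases hmem x List.mem_cons_self with ⟨y, hy, rfl⟩ | rfl
      · refine ⟨y :: u, v, k, ?_, hv, ?_, ?_, hk0⟩
        · intro z hz; rcases List.mem_cons.mp hz with rfl | hz
          exacts [hy, hu z hz]
        · simp [← hlen]; omega
        · simp only [List.foldr_cons, heval, mul_ff, List.prod_cons, one_mul]
      · refine ⟨v, u, k + 1, hv, hu, ?_, ?_, by omega⟩
        · simp [← hlen]; omega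
        · simp only [List.foldr_cons, heval, mul_tt, one_mul, List.prod_cons]
          congr 1
          rcases Nat.even_or_odd k with he | ho
          · have h1 : k % 2 = 0 := Nat.even_iff.mp he
            have h2 : (k+1) % 2 = 1 := by omega
            simp [h1, h2]
          · have h1 : k % 2 = 1 := Nat.odd_iff.mp ho
            have h2 : (k+1) % 2 = 0 := by omega
            simp [h1, h2]


end Alg

section Bounds
variable {G : Type*} [Group G] (Y : Set G)

/-- the swap generator -/
def wT : (G × G) × Bool := (((1:G),(1:G)), true)

lemma wT_mem : wT ∈ wrC2Gens Y := Or.inr rfl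

lemma foldr_mul (w : List ((G × G) × Bool)) (x : (G × G) × Bool) :
    w.foldr wrC2Mul x = wrC2Mul (w.foldr wrC2Mul (((1:G),(1:G)), false)) x := by
  induction w with
  | nil => exact (e_mul x).symm
  | cons a w ih => simp only [List.foldr_cons, ih, wr_assoc]

def inj1 : List G → List ((G × G) × Bool) := List.map (fun y => ((y, (1:G)), false))

lemma inj1_mem {w : List G} (hw : ∀ x ∈ w, x ∈ Y) :
    ∀ z ∈ inj1 w, z ∈ wrC2Gens Y := by
  intro z hz
  obtain ⟨y, hy, rfl⟩ := List.mem_map.mp hz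
  exact Or.inl ⟨y, hw y hy, rfl⟩

lemma eval_inj1 (w : List G) :
    (inj1 w).foldr wrC2Mul (((1:G),(1:G)), false) = ((w.prod, 1), false) := by
  induction w with
  | nil => simp [inj1]
  | cons a w ih =>
      simp only [inj1, List.map_cons, List.foldr_cons] at ih ⊢
      rw [ih, mul_ff, List.prod_cons, mul_one]

lemma eval_U2 (wg wh : List G) :
    (inj1 wg ++ wT :: inj1 wh).foldr wrC2Mul (((1:G),(1:G)), false)
      = ((wg.prod, wh.prod), true) := by
  rw [List.foldr_append, foldr_mul]
  have h1 : (wT :: inj1 wh).foldr wrC2Mul (((1:G),(1:G)), false)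
      = (((1:G), wh.prod), true) := by
    simp only [List.foldr_cons, eval_inj1]
    simp [wT, wrC2Mul]
  rw [h1, eval_inj1]
  simp [wrC2Mul]

lemma eval_U3 (wg wh : List G) :
    (inj1 wg ++ wT :: (inj1 wh ++ [wT])).foldr wrC2Mul (((1:G),(1:G)), false)
      = ((wg.prod, wh.prod), false) := by
  rw [List.foldr_append, foldr_mul]
  have h2 : ([wT] : List ((G × G) × Bool)).foldr wrC2Mul (((1:G),(1:G)), false) = wT := by
    simp [wT, wrC2Mul]
  have h1 : (wT :: (inj1 wh ++ [wT])).foldr wrC2Mul (((1:G),(1:G)), false)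
      = (((1:G), wh.prod), false) := by
    simp only [List.foldr_cons, List.foldr_append, h2]
    rw [foldr_mul, eval_inj1]
    simp [wT, wrC2Mul]
  rw [h1, eval_inj1]
  simp [wrC2Mul]

lemma wrC2Len_le_of_word {x : (G × G) × Bool} {w : List ((G × G) × Bool)}
    (hw : ∀ z ∈ w, z ∈ wrC2Gens Y) (he : w.foldr wrC2Mul (((1:G),(1:G)), false) = x) :
    wrC2Len Y x ≤ w.length :=
  Nat.sInf_le ⟨w, rfl, hw, he⟩

variable (hYsymm : ∀ y ∈ Y, y⁻¹ ∈ Y) (hYgen : Subgroup.closure Y = ⊤)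
include hYsymm hYgen

lemma wrC2Len_true_le (g h : G) :
    wrC2Len Y ((g,h),true) ≤ wordLen Y g + wordLen Y h + 1 := by
  obtain ⟨wg, hlg, hwg, hpg⟩ := exists_word Y hYsymm hYgen g
  obtain ⟨wh, hlh, hwh, hph⟩ := exists_word Y hYsymm hYgen h
  have := wrC2Len_le_of_word Y (x := ((g,h),true)) (w := inj1 wg ++ wT :: inj1 wh)
    (by
      intro z hz
      rcases List.mem_append.mp hz with hz | hz
      · exact inj1_mem Y hwg z hz
      · rcases List.mem_cons.mp hz with rfl | hz
        · exact wT_mem Y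
        · exact inj1_mem Y hwh z hz)
    (by rw [eval_U2, hpg, hph])
  simpa [inj1, hlg, hlh, Nat.add_assoc] using this

lemma wrC2Len_false_le (g h : G) :
    wrC2Len Y ((g,h),false) ≤ wordLen Y g + wordLen Y h + 2 := by
  obtain ⟨wg, hlg, hwg, hpg⟩ := exists_word Y hYsymm hYgen g
  obtain ⟨wh, hlh, hwh, hph⟩ := exists_word Y hYsymm hYgen h
  have := wrC2Len_le_of_word Y (x := ((g,h),false)) (w := inj1 wg ++ wT :: (inj1 wh ++ [wT]))
    (by
      intro z hz
      rcases List.mem_append.mp hz with hz | hz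
      · exact inj1_mem Y hwg z hz
      · rcases List.mem_cons.mp hz with rfl | hz
        · exact wT_mem Y
        · rcases List.mem_append.mp hz with hz | hz
          · exact inj1_mem Y hwh z hz
          · rcases List.mem_singleton.mp hz with rfl
            exact wT_mem Y)
    (by rw [eval_U3, hpg, hph])
  simp [inj1, hlg, hlh] at this; omega

lemma wrC2Len_single_le (g : G) :
    wrC2Len Y ((g,(1:G)),false) ≤ wordLen Y g := by
  obtain ⟨wg, hlg, hwg, hpg⟩ := exists_word Y hYsymm hYgen g
  have := wrC2Len_le_of_word Y (x := ((g,(1:G)),false)) (w := inj1 wg)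
    (inj1_mem Y hwg) (by rw [eval_inj1, hpg])
  simpa [inj1, hlg] using this

lemma exists_wr_word (x : (G × G) × Bool) :
    ∃ w : List ((G × G) × Bool), w.length = wrC2Len Y x ∧ (∀ z ∈ w, z ∈ wrC2Gens Y) ∧
      w.foldr wrC2Mul (((1:G),(1:G)), false) = x := by
  obtain ⟨⟨g, h⟩, s⟩ := x
  obtain ⟨wg, _, hwg, hpg⟩ := exists_word Y hYsymm hYgen g
  obtain ⟨wh, _, hwh, hph⟩ := exists_word Y hYsymm hYgen h
  cases s
  · have hmem0 : ∀ z ∈ inj1 wg ++ wT :: (inj1 wh ++ [wT]), z ∈ wrC2Gens Y := by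
      intro z hz
      rcases List.mem_append.mp hz with hz | hz
      · exact inj1_mem Y hwg z hz
      · rcases List.mem_cons.mp hz with rfl | hz
        · exact wT_mem Y
        · rcases List.mem_append.mp hz with hz | hz
          · exact inj1_mem Y hwh z hz
          · rcases List.mem_singleton.mp hz with rfl
            exact wT_mem Y
    have hne : {n | ∃ w : List ((G × G) × Bool), w.length = n ∧ (∀ z ∈ w, z ∈ wrC2Gens Y) ∧
        w.foldr wrC2Mul (((1:G),(1:G)), false) = ((g,h),false)}.Nonempty :=
      ⟨_, _, rfl, hmem0, by rw [eval_U3, hpg, hph]⟩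
    exact Nat.sInf_mem hne
  · have hmem0 : ∀ z ∈ inj1 wg ++ wT :: inj1 wh, z ∈ wrC2Gens Y := by
      intro z hz
      rcases List.mem_append.mp hz with hz | hz
      · exact inj1_mem Y hwg z hz
      · rcases List.mem_cons.mp hz with rfl | hz
        · exact wT_mem Y
        · exact inj1_mem Y hwh z hz
    have hne : {n | ∃ w : List ((G × G) × Bool), w.length = n ∧ (∀ z ∈ w, z ∈ wrC2Gens Y) ∧
        w.foldr wrC2Mul (((1:G),(1:G)), false) = ((g,h),true)}.Nonempty :=
      ⟨_, _, rfl, hmem0, by rw [eval_U2, hpg, hph]⟩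
    exact Nat.sInf_mem hne

open scoped Classical in
lemma wrC2Len_lower (g h : G) (s : Bool) :
    wordLen Y g + wordLen Y h + (if s then 1 else if h = 1 then 0 else 2)
      ≤ wrC2Len Y ((g,h),s) := by
  obtain ⟨w, hlen, hmem, heval⟩ := exists_wr_word Y hYsymm hYgen ((g,h),s)
  obtain ⟨u, v, k, hu, hv, hulen, hweval, hk0⟩ := word_structure Y w hmem
  rw [heval] at hweval
  have hup : u.prod = g := by
    have := congrArg (fun p => p.1.1) hweval; simpa using this.symm
  have hvp : v.prod = h := by
    have := congrArg (fun p => p.1.2) hweval; simpa using this.symm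
  have hcur : s = decide (k % 2 = 1) := by
    have := congrArg (fun p => p.2) hweval; simpa using this
  have h1 : wordLen Y g ≤ u.length := wordLen_le Y hu hup
  have h2 : wordLen Y h ≤ v.length := wordLen_le Y hv hvp
  rw [← hlen, ← hulen]
  cases s
  · have hke : k % 2 = 0 := by
      rcases Nat.mod_two_eq_zero_or_one k with h' | h'
      · exact h'
      · simp [h'] at hcur
    by_cases hh : h = 1
    · have hpen : (if (false:Bool) = true then 1 else if h = 1 then 0 else 2) = 0 := by simp [hh]
      rw [hpen]; omega
    · have hkne : k ≠ 0 := fun hk => hh (by rw [← hvp, hk0 hk, List.prod_nil])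
      have hpen : (if (false:Bool) = true then 1 else if h = 1 then 0 else 2) = 2 := by simp [hh]
      rw [hpen]; omega
  · have hko : k % 2 = 1 := by
      rcases Nat.mod_two_eq_zero_or_one k with h' | h'
      · simp [h'] at hcur
      · exact h'
    have hpen : (if (true:Bool) = true then 1 else if h = 1 then 0 else 2) = 1 := by simp
    rw [hpen]; omega

end Bounds

section ConjFormulas
variable {G : Type*} [Group G] (Y : Set G)

lemma wrC2Conj_refl (x : (G × G) × Bool) : wrC2Conj x x :=
  ⟨(((1:G),(1:G)),false), by rw [e_mul, mul_e]⟩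

lemma mk_eq_one_iff {h : G} : ConjClasses.mk h = ConjClasses.mk (1:G) ↔ h = 1 := by
  rw [ConjClasses.mk_eq_mk_iff_isConj]
  constructor
  · intro hc; exact isConj_one_right.mp hc.symm
  · rintro rfl; exact IsConj.refl 1

open scoped Classical in
noncomputable def pen (c d : ConjClasses G) : ℕ :=
  if c = ConjClasses.mk (1:G) ∨ d = ConjClasses.mk (1:G) then 0 else 2

lemma pen_comm (c d : ConjClasses G) : pen c d = pen d c := by
  unfold pen
  by_cases h : c = ConjClasses.mk 1 ∨ d = ConjClasses.mk 1
  · rw [if_pos h, if_pos (Or.symm h)]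
  · rw [if_neg h, if_neg (fun hh => h (Or.symm hh))]

lemma pen_le_two (c d : ConjClasses G) : pen c d ≤ 2 := by
  unfold pen; split <;> omega

lemma wrC2ConjLen_le {x h' : (G × G) × Bool} (hc : wrC2Conj x h') :
    wrC2ConjLen Y x ≤ wrC2Len Y h' :=
  Nat.sInf_le ⟨h', hc, rfl⟩

lemma exists_conj_min (x : (G × G) × Bool) :
    ∃ h', wrC2Conj x h' ∧ wrC2Len Y h' = wrC2ConjLen Y x := by
  have hne : {n | ∃ h', wrC2Conj x h' ∧ wrC2Len Y h' = n}.Nonempty :=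
    ⟨wrC2Len Y x, x, wrC2Conj_refl x, rfl⟩
  exact Nat.sInf_mem hne

variable (hYsymm : ∀ y ∈ Y, y⁻¹ ∈ Y) (hYgen : Subgroup.closure Y = ⊤)
include hYsymm hYgen

theorem wrC2ConjLen_false (g h : G) :
    wrC2ConjLen Y ((g,h),false)
      = conjLen Y (ConjClasses.mk g) + conjLen Y (ConjClasses.mk h)
        + pen (ConjClasses.mk g) (ConjClasses.mk h) := by
  apply le_antisymm
  · by_cases hh : h = 1
    · obtain ⟨g₀, hg₀, hwl⟩ := exists_conj_minrep Y (ConjClasses.mk g)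
      have hconj : wrC2Conj ((g,h),false) ((g₀,(1:G)),false) :=
        (conj_false_iff g h g₀ 1).mpr (Or.inl
          ⟨(ConjClasses.mk_eq_mk_iff_isConj.mp hg₀).symm, hh ▸ IsConj.refl (1:G)⟩)
      have h1 := wrC2Len_single_le Y hYsymm hYgen g₀
      have h2 := wrC2ConjLen_le Y hconj
      have h3 : conjLen Y (ConjClasses.mk h) = 0 := by rw [hh]; exact conjLen_one Y
      have h4 : pen (ConjClasses.mk g) (ConjClasses.mk h) = 0 := by
        simp [pen, mk_eq_one_iff, hh]
      omega
    · by_cases hg : g = 1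
      · obtain ⟨h₀, hh₀, hwl⟩ := exists_conj_minrep Y (ConjClasses.mk h)
        have hconj : wrC2Conj ((g,h),false) ((h₀,(1:G)),false) :=
          (conj_false_iff g h h₀ 1).mpr (Or.inr
            ⟨(ConjClasses.mk_eq_mk_iff_isConj.mp hh₀).symm, hg ▸ IsConj.refl (1:G)⟩)
        have h1 := wrC2Len_single_le Y hYsymm hYgen h₀
        have h2 := wrC2ConjLen_le Y hconj
        have h3 : conjLen Y (ConjClasses.mk g) = 0 := by rw [hg]; exact conjLen_one Y
        have h4 : pen (ConjClasses.mk g) (ConjClasses.mk h) = 0 := by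
          simp [pen, mk_eq_one_iff, hg]
        omega
      · obtain ⟨g₀, hg₀, hwlg⟩ := exists_conj_minrep Y (ConjClasses.mk g)
        obtain ⟨h₀, hh₀, hwlh⟩ := exists_conj_minrep Y (ConjClasses.mk h)
        have hconj : wrC2Conj ((g,h),false) ((g₀,h₀),false) :=
          (conj_false_iff g h g₀ h₀).mpr (Or.inl
            ⟨(ConjClasses.mk_eq_mk_iff_isConj.mp hg₀).symm,
             (ConjClasses.mk_eq_mk_iff_isConj.mp hh₀).symm⟩)
        have h1 := wrC2Len_false_le Y hYsymm hYgen g₀ h₀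
        have h2 := wrC2ConjLen_le Y hconj
        have h4 : pen (ConjClasses.mk g) (ConjClasses.mk h) = 2 := by
          simp [pen, mk_eq_one_iff, hg, hh]
        omega
  · obtain ⟨h', hconj, hlen⟩ := exists_conj_min Y ((g,h),false)
    rw [← hlen]
    have hcur := conj_cursor hconj
    obtain ⟨⟨g', h''⟩, s'⟩ := h'
    cases s'
    · have hcl := (conj_false_iff g h g' h'').mp hconj
      have hlow := wrC2Len_lower Y hYsymm hYgen g' h'' false
      rcases hcl with ⟨hc1, hc2⟩ | ⟨hc1, hc2⟩
      · have e1 : conjLen Y (ConjClasses.mk g) ≤ wordLen Y g' := by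
          rw [ConjClasses.mk_eq_mk_iff_isConj.mpr hc1]; exact conjLen_le Y rfl
        have e2 : conjLen Y (ConjClasses.mk h) ≤ wordLen Y h'' := by
          rw [ConjClasses.mk_eq_mk_iff_isConj.mpr hc2]; exact conjLen_le Y rfl
        by_cases hh'' : h'' = 1
        · have h4 : pen (ConjClasses.mk g) (ConjClasses.mk h) = 0 := by
            have : ConjClasses.mk h = ConjClasses.mk (1:G) := by
              rw [ConjClasses.mk_eq_mk_iff_isConj.mpr hc2, hh'']
            simp [pen, this]
          rw [if_neg Bool.false_ne_true, if_pos hh''] at hlow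
          omega
        · have h4 := pen_le_two (ConjClasses.mk g) (ConjClasses.mk h)
          rw [if_neg Bool.false_ne_true, if_neg hh''] at hlow
          omega
      · have e1 : conjLen Y (ConjClasses.mk h) ≤ wordLen Y g' := by
          rw [ConjClasses.mk_eq_mk_iff_isConj.mpr hc1]; exact conjLen_le Y rfl
        have e2 : conjLen Y (ConjClasses.mk g) ≤ wordLen Y h'' := by
          rw [ConjClasses.mk_eq_mk_iff_isConj.mpr hc2]; exact conjLen_le Y rfl
        by_cases hh'' : h'' = 1
        · have h4 : pen (ConjClasses.mk g) (ConjClasses.mk h) = 0 := by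
            have : ConjClasses.mk g = ConjClasses.mk (1:G) := by
              rw [ConjClasses.mk_eq_mk_iff_isConj.mpr hc2, hh'']
            simp [pen, this]
          rw [if_neg Bool.false_ne_true, if_pos hh''] at hlow
          omega
        · have h4 := pen_le_two (ConjClasses.mk g) (ConjClasses.mk h)
          rw [if_neg Bool.false_ne_true, if_neg hh''] at hlow
          omega
    · simp at hcur

theorem wrC2ConjLen_true (g h : G) :
    wrC2ConjLen Y ((g,h),true) = conjLen Y (ConjClasses.mk (g*h)) + 1 := by
  apply le_antisymm
  · obtain ⟨p₀, hp₀, hwl⟩ := exists_conj_minrep Y (ConjClasses.mk (g*h))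
    have hconj : wrC2Conj ((g,h),true) ((p₀,(1:G)),true) :=
      (conj_true_iff g h p₀ 1).mpr
        (by rw [mul_one]; exact (ConjClasses.mk_eq_mk_iff_isConj.mp hp₀).symm)
    have h1 := wrC2ConjLen_le Y hconj
    have h2 := wrC2Len_true_le Y hYsymm hYgen p₀ 1
    have h3 : wordLen Y (1:G) = 0 := wordLen_one Y
    omega
  · obtain ⟨h', hconj, hlen⟩ := exists_conj_min Y ((g,h),true)
    rw [← hlen]
    have hcur := conj_cursor hconj
    obtain ⟨⟨g', h''⟩, s'⟩ := h'
    cases s'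
    · simp at hcur
    · have hc := (conj_true_iff g h g' h'').mp hconj
      have hlow := wrC2Len_lower Y hYsymm hYgen g' h'' true
      rw [if_pos rfl] at hlow
      have hsub := wordLen_mul_le Y hYsymm hYgen g' h''
      have e1 : conjLen Y (ConjClasses.mk (g*h)) ≤ wordLen Y (g'*h'') := by
        rw [ConjClasses.mk_eq_mk_iff_isConj.mpr hc]; exact conjLen_le Y rfl
      omega

end ConjFormulas

section Generic

/-- split a subtype count by an extra predicate -/
lemma card_split {α : Type*} (q p : α → Prop) (hfin : Finite {x // q x}) :
    Nat.card {x // q x} = Nat.card {x // q x ∧ p x} + Nat.card {x // q x ∧ ¬ p x} := by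
  classical
  have e1 : {x : {x // q x} // p x.1} ≃ {x // q x ∧ p x} :=
    Equiv.subtypeSubtypeEquivSubtypeInter q p
  have e2 : {x : {x // q x} // ¬ p x.1} ≃ {x // q x ∧ ¬ p x} :=
    Equiv.subtypeSubtypeEquivSubtypeInter q (fun x => ¬ p x)
  have e : {x // q x} ≃ {x : {x // q x} // p x.1} ⊕ {x : {x // q x} // ¬ p x.1} :=
    (Equiv.sumCompl _).symm
  rw [Nat.card_congr e, Nat.card_sum, Nat.card_congr e1, Nat.card_congr e2]

lemma nat_card_sigma {ι : Type*} [Fintype ι] (β : ι → Type*) [∀ i, Finite (β i)] :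
    Nat.card (Σ i, β i) = ∑ i, Nat.card (β i) := by
  classical
  letI : ∀ i, Fintype (β i) := fun i => Fintype.ofFinite (β i)
  simp only [Nat.card_eq_fintype_card, Fintype.card_sigma]

def sumSubtypeEquiv {α β : Type*} (P : α ⊕ β → Prop) :
    {z // P z} ≃ {a // P (Sum.inl a)} ⊕ {b // P (Sum.inr b)} where
  toFun z := match z with
    | ⟨.inl a, h⟩ => .inl ⟨a, h⟩
    | ⟨.inr b, h⟩ => .inr ⟨b, h⟩
  invFun w := match w with
    | .inl ⟨a, h⟩ => ⟨.inl a, h⟩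
    | .inr ⟨b, h⟩ => ⟨.inr b, h⟩
  left_inv := by rintro ⟨(a | b), h⟩ <;> rfl
  right_inv := by rintro (⟨a, h⟩ | ⟨b, h⟩) <;> rfl

end Generic

section Classify
variable {G : Type*} [Group G] (Y : Set G)

def phi : ((G × G) × Bool) → ConjClasses G ⊕ Sym2 (ConjClasses G)
  | ((g, h), true) => .inl (ConjClasses.mk (g * h))
  | ((g, h), false) => .inr (Sym2.mk (ConjClasses.mk g) (ConjClasses.mk h))

lemma phi_const : ∀ {x y : (G × G) × Bool}, wrC2Conj x y → phi x = phi y := by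
  rintro ⟨⟨g, h⟩, s⟩ ⟨⟨g', h'⟩, s'⟩ hc
  have hcur := conj_cursor hc
  simp only at hcur
  subst hcur
  cases s
  · rcases (conj_false_iff g h g' h').mp hc with ⟨h1, h2⟩ | ⟨h1, h2⟩
    · simp only [phi, Sum.inr.injEq]
      rw [ConjClasses.mk_eq_mk_iff_isConj.mpr h1, ConjClasses.mk_eq_mk_iff_isConj.mpr h2]
    · simp only [phi, Sum.inr.injEq]
      rw [ConjClasses.mk_eq_mk_iff_isConj.mpr h2, ConjClasses.mk_eq_mk_iff_isConj.mpr h1]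
      exact Sym2.eq_swap
  · simp only [phi, Sum.inl.injEq]
    exact ConjClasses.mk_eq_mk_iff_isConj.mpr ((conj_true_iff g h g' h').mp hc)

noncomputable def Phi : Quot (wrC2Conj (G := G)) → ConjClasses G ⊕ Sym2 (ConjClasses G) :=
  Quot.lift phi (fun _ _ h => phi_const h)

lemma Phi_bijective : Function.Bijective (Phi (G := G)) := by
  constructor
  · intro q1 q2
    induction q1 using Quot.ind with | _ x =>
    induction q2 using Quot.ind with | _ y =>
    intro h
    apply Quot.sound
    obtain ⟨⟨g, h1⟩, s⟩ := x
    obtain ⟨⟨g', h1'⟩, s'⟩ := y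
    cases s <;> cases s' <;> simp only [Phi, phi] at h
    · rw [Sum.inr.injEq] at h
      rcases Sym2.eq_iff.mp h with ⟨e1, e2⟩ | ⟨e1, e2⟩
      · exact (conj_false_iff _ _ _ _).mpr (Or.inl
          ⟨ConjClasses.mk_eq_mk_iff_isConj.mp e1, ConjClasses.mk_eq_mk_iff_isConj.mp e2⟩)
      · exact (conj_false_iff _ _ _ _).mpr (Or.inr
          ⟨ConjClasses.mk_eq_mk_iff_isConj.mp e2, ConjClasses.mk_eq_mk_iff_isConj.mp e1⟩)
    · exact absurd h (by simp)
    · exact absurd h (by simp)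
    · rw [Sum.inl.injEq] at h
      exact (conj_true_iff _ _ _ _).mpr (ConjClasses.mk_eq_mk_iff_isConj.mp h)
  · intro z
    rcases z with c | s
    · obtain ⟨g, hg⟩ := ConjClasses.exists_rep c
      exact ⟨Quot.mk _ ((g, (1:G)), true), by simp only [Phi, phi, mul_one, hg]⟩
    · induction s using Sym2.ind with | _ c d =>
      obtain ⟨g, hg⟩ := ConjClasses.exists_rep c
      obtain ⟨h, hh⟩ := ConjClasses.exists_rep d
      exact ⟨Quot.mk _ ((g, h), false), by simp only [Phi, phi, hg, hh]⟩

noncomputable def lenS (Y : Set G) : ConjClasses G ⊕ Sym2 (ConjClasses G) → ℕ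
  | .inl c => conjLen Y c + 1
  | .inr s => Sym2.lift ⟨fun c d => conjLen Y c + conjLen Y d + pen c d,
      fun a b => by dsimp only; rw [pen_comm a b]; ring⟩ s

@[simp] lemma lenS_inl (c : ConjClasses G) : lenS Y (.inl c) = conjLen Y c + 1 := rfl

@[simp] lemma lenS_inr (c d : ConjClasses G) :
    lenS Y (.inr (Sym2.mk c d)) = conjLen Y c + conjLen Y d + pen c d := rfl

lemma wrC2ConjLen_eq_lenS (hYsymm : ∀ y ∈ Y, y⁻¹ ∈ Y) (hYgen : Subgroup.closure Y = ⊤)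
    (x : (G × G) × Bool) : wrC2ConjLen Y x = lenS Y (phi x) := by
  obtain ⟨⟨g, h⟩, s⟩ := x
  cases s
  · rw [show phi ((g,h),false) = .inr (Sym2.mk (ConjClasses.mk g) (ConjClasses.mk h)) from rfl,
      lenS_inr]
    exact wrC2ConjLen_false Y hYsymm hYgen g h
  · exact wrC2ConjLen_true Y hYsymm hYgen g h

lemma wrC2ConjCount_eq (hYsymm : ∀ y ∈ Y, y⁻¹ ∈ Y) (hYgen : Subgroup.closure Y = ⊤) (m : ℕ) :
    wrC2ConjCount Y m
      = Nat.card {z : ConjClasses G ⊕ Sym2 (ConjClasses G) // lenS Y z = m} := by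
  apply Nat.card_congr
  refine Equiv.subtypeEquiv (Equiv.ofBijective Phi Phi_bijective) (fun q => ?_)
  constructor
  · rintro ⟨g, rfl, hlen⟩
    rw [show (Equiv.ofBijective Phi Phi_bijective) (Quot.mk _ g) = phi g from rfl]
    rw [← wrC2ConjLen_eq_lenS Y hYsymm hYgen g]
    exact hlen
  · intro hl
    obtain ⟨g, rfl⟩ := Quot.exists_rep q
    refine ⟨g, rfl, ?_⟩
    rw [wrC2ConjLen_eq_lenS Y hYsymm hYgen g]
    exact hl

end Classify

section Generic2

lemma fin_of_sub {α : Type*} (q r : α → Prop) (h : ∀ x, q x → r x)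
    (hr : Finite {x // r x}) : Finite {x // q x} := by
  apply Finite.of_injective (fun x : {x // q x} => (⟨x.1, h x.1 x.2⟩ : {x // r x}))
  intro a b hab
  apply Subtype.ext
  have h2 := congrArg Subtype.val hab
  exact h2

end Generic2

section Counting
variable {G : Type*} [Group G] (Y : Set G)

noncomputable def conjCount' (i : ℕ) : ℕ :=
  Nat.card {c : ConjClasses G // c ≠ ConjClasses.mk (1:G) ∧ conjLen Y c = i}

lemma finite_conjLen_le (hYsymm : ∀ y ∈ Y, y⁻¹ ∈ Y) (hYgen : Subgroup.closure Y = ⊤)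
    (hYfin : Y.Finite) (n : ℕ) : {c : ConjClasses G | conjLen Y c ≤ n}.Finite := by
  have hsub : {c : ConjClasses G | conjLen Y c ≤ n} ⊆
      ⋃ i ∈ Finset.range (n+1), {c : ConjClasses G | conjLen Y c = i} := by
    intro c hc
    simp only [Set.mem_setOf_eq] at hc
    simp only [Set.mem_iUnion, Finset.mem_range]
    exact ⟨conjLen Y c, by omega, rfl⟩
  exact Set.Finite.subset
    (Set.Finite.biUnion (Finset.finite_toSet _)
      (fun i _ => finite_conjLen_eq Y hYsymm hYgen hYfin i)) hsub

lemma fin_cl_eq (hYsymm : ∀ y ∈ Y, y⁻¹ ∈ Y) (hYgen : Subgroup.closure Y = ⊤)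
    (hYfin : Y.Finite) (n : ℕ) : Finite {c : ConjClasses G // conjLen Y c = n} :=
  (finite_conjLen_eq Y hYsymm hYgen hYfin n).to_subtype

lemma fin_cl_ne_eq (hYsymm : ∀ y ∈ Y, y⁻¹ ∈ Y) (hYgen : Subgroup.closure Y = ⊤)
    (hYfin : Y.Finite) (n : ℕ) :
    Finite {c : ConjClasses G // c ≠ ConjClasses.mk (1:G) ∧ conjLen Y c = n} :=
  fin_of_sub _ _ (fun _ h => h.2) (fin_cl_eq Y hYsymm hYgen hYfin n)

lemma conjCount_split (hYsymm : ∀ y ∈ Y, y⁻¹ ∈ Y) (hYgen : Subgroup.closure Y = ⊤)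
    (hYfin : Y.Finite) (i : ℕ) :
    conjCount Y i = (if i = 0 then 1 else 0) + conjCount' Y i := by
  have h0 := card_split (fun c : ConjClasses G => conjLen Y c = i)
    (fun c => c = ConjClasses.mk (1:G)) (fin_cl_eq Y hYsymm hYgen hYfin i)
  have h1 : Nat.card {c : ConjClasses G // conjLen Y c = i ∧ c = ConjClasses.mk (1:G)}
      = if i = 0 then 1 else 0 := by
    cases i with
    | zero =>
        haveI : Unique {c : ConjClasses G // conjLen Y c = 0 ∧ c = ConjClasses.mk (1:G)} := by
          refine ⟨⟨⟨ConjClasses.mk (1:G), conjLen_one Y, rfl⟩⟩, ?_⟩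
          rintro ⟨c, hc1, hc2⟩
          exact Subtype.ext hc2
        simp [Nat.card_unique]
    | succ k =>
        haveI : IsEmpty {c : ConjClasses G // conjLen Y c = k + 1 ∧ c = ConjClasses.mk (1:G)} := by
          refine ⟨?_⟩
          rintro ⟨c, hc1, rfl⟩
          rw [conjLen_one] at hc1
          omega
        simp [Nat.card_of_isEmpty]
  have h2 : Nat.card {c : ConjClasses G // conjLen Y c = i ∧ ¬ c = ConjClasses.mk (1:G)}
      = conjCount' Y i :=
    Nat.card_congr (Equiv.subtypeEquivRight (fun c => by tauto))
  show Nat.card {c : ConjClasses G // conjLen Y c = i} = _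
  rw [h0, h1, h2]

lemma finite_sym2_lenS (hYsymm : ∀ y ∈ Y, y⁻¹ ∈ Y) (hYgen : Subgroup.closure Y = ⊤)
    (hYfin : Y.Finite) (m : ℕ) :
    Finite {s : Sym2 (ConjClasses G) // lenS Y (.inr s) = m} := by
  have hfin : ({c : ConjClasses G | conjLen Y c ≤ m} ×ˢ {c : ConjClasses G | conjLen Y c ≤ m}).Finite :=
    (finite_conjLen_le Y hYsymm hYgen hYfin m).prod (finite_conjLen_le Y hYsymm hYgen hYfin m)
  have himg : {s : Sym2 (ConjClasses G) | lenS Y (.inr s) = m}.Finite := by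
    apply Set.Finite.subset (Set.Finite.image Sym2.mk.uncurry hfin)
    intro s hs
    induction s using Sym2.ind with | _ a b =>
    refine ⟨(a, b), ⟨?_, ?_⟩, rfl⟩
    · have := hs
      rw [Set.mem_setOf_eq, lenS_inr] at this
      simp only [Set.mem_setOf_eq]
      omega
    · have := hs
      rw [Set.mem_setOf_eq, lenS_inr] at this
      simp only [Set.mem_setOf_eq]
      omega
  exact himg.to_subtype

lemma card_sym2_one (hYsymm : ∀ y ∈ Y, y⁻¹ ∈ Y) (hYgen : Subgroup.closure Y = ⊤)
    (hYfin : Y.Finite) (m : ℕ) :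
    Nat.card {s : Sym2 (ConjClasses G) //
        lenS Y (.inr s) = m ∧ ConjClasses.mk (1:G) ∈ s} = conjCount Y m := by
  have hpen : ∀ c : ConjClasses G, pen (ConjClasses.mk (1:G)) c = 0 := by
    intro c; simp [pen]
  refine (Nat.card_congr (Equiv.ofBijective
    (fun c : {c : ConjClasses G // conjLen Y c = m} =>
      (⟨Sym2.mk (ConjClasses.mk (1:G)) c.1, by
        rw [lenS_inr, conjLen_one, hpen, c.2]; omega, Sym2.mem_iff.mpr (Or.inl rfl)⟩ :
        {s : Sym2 (ConjClasses G) // lenS Y (.inr s) = m ∧ ConjClasses.mk (1:G) ∈ s}))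
    ⟨?_, ?_⟩)).symm
  · intro c1 c2 h
    have h' := Subtype.ext_iff.mp h
    simp only at h'
    rcases Sym2.eq_iff.mp h' with ⟨-, e⟩ | ⟨e1, e2⟩
    · exact Subtype.ext e
    · exact Subtype.ext (e2.trans e1)
  · rintro ⟨s, hlen, hmem⟩
    induction s using Sym2.ind with | _ a b =>
    rcases Sym2.mem_iff.mp hmem with h | h
    · refine ⟨⟨b, ?_⟩, ?_⟩
      · rw [lenS_inr, ← h, conjLen_one, hpen] at hlen
        omega
      · apply Subtype.ext
        simp only
        rw [h]
    · refine ⟨⟨a, ?_⟩, ?_⟩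
      · rw [lenS_inr, ← h] at hlen
        rw [conjLen_one] at hlen
        have := hpen (ConjClasses.mk (1:G))
        rw [pen_comm, hpen] at hlen
        omega
      · apply Subtype.ext
        simp only
        rw [h]
        exact Sym2.eq_swap

lemma card_sym2_b_small (m : ℕ) (hm : m < 2) :
    Nat.card {s : Sym2 (ConjClasses G) //
        lenS Y (.inr s) = m ∧ ¬ ConjClasses.mk (1:G) ∈ s} = 0 := by
  haveI : IsEmpty {s : Sym2 (ConjClasses G) //
      lenS Y (.inr s) = m ∧ ¬ ConjClasses.mk (1:G) ∈ s} := by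
    refine ⟨?_⟩
    rintro ⟨s, hlen, hmem⟩
    induction s using Sym2.ind with | _ a b =>
    rw [Sym2.mem_iff] at hmem
    push_neg at hmem
    have hpen : pen a b = 2 := by
      have h1 : a ≠ ConjClasses.mk (1:G) := fun h => hmem.1 h.symm
      have h2 : b ≠ ConjClasses.mk (1:G) := fun h => hmem.2 h.symm
      simp [pen, h1, h2]
    rw [lenS_inr, hpen] at hlen
    omega
  simp [Nat.card_of_isEmpty]

end Counting

section Burnside
variable {G : Type*} [Group G] (Y : Set G)

lemma D_eq (n : ℕ) :
    Nat.card {c : ConjClasses G // c ≠ ConjClasses.mk (1:G) ∧ 2 * conjLen Y c = n}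
      = if 2 ∣ n then conjCount' Y (n / 2) else 0 := by
  by_cases hdvd : 2 ∣ n
  · rw [if_pos hdvd]
    apply Nat.card_congr
    refine Equiv.subtypeEquivRight (fun c => ?_)
    obtain ⟨k, rfl⟩ := hdvd
    constructor
    · rintro ⟨h1, h2⟩; exact ⟨h1, by omega⟩
    · rintro ⟨h1, h2⟩; exact ⟨h1, by omega⟩
  · rw [if_neg hdvd]
    haveI : IsEmpty {c : ConjClasses G // c ≠ ConjClasses.mk (1:G) ∧ 2 * conjLen Y c = n} := by
      refine ⟨?_⟩
      rintro ⟨c, -, hc⟩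
      exact hdvd ⟨conjLen Y c, hc.symm⟩
    simp [Nat.card_of_isEmpty]

lemma O_eq (hYsymm : ∀ y ∈ Y, y⁻¹ ∈ Y) (hYgen : Subgroup.closure Y = ⊤)
    (hYfin : Y.Finite) (n : ℕ) :
    Nat.card {p : ConjClasses G × ConjClasses G //
        (p.1 ≠ ConjClasses.mk (1:G) ∧ p.2 ≠ ConjClasses.mk (1:G)) ∧
          conjLen Y p.1 + conjLen Y p.2 = n}
      = ∑ ij ∈ Finset.HasAntidiagonal.antidiagonal n, conjCount' Y ij.1 * conjCount' Y ij.2 := by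
  classical
  haveI : ∀ i : ℕ, Finite {c : ConjClasses G // c ≠ ConjClasses.mk (1:G) ∧ conjLen Y c = i} :=
    fun i => fin_cl_ne_eq Y hYsymm hYgen hYfin i
  have E : {p : ConjClasses G × ConjClasses G //
        (p.1 ≠ ConjClasses.mk (1:G) ∧ p.2 ≠ ConjClasses.mk (1:G)) ∧
          conjLen Y p.1 + conjLen Y p.2 = n}
      ≃ Σ ij : ↑(Finset.HasAntidiagonal.antidiagonal n),
          ({c : ConjClasses G // c ≠ ConjClasses.mk (1:G) ∧ conjLen Y c = (ij : ℕ × ℕ).1} ×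
           {c : ConjClasses G // c ≠ ConjClasses.mk (1:G) ∧ conjLen Y c = (ij : ℕ × ℕ).2}) := by
    refine ⟨fun p => ⟨⟨(conjLen Y p.1.1, conjLen Y p.1.2), Finset.HasAntidiagonal.mem_antidiagonal.mpr p.2.2⟩,
      (⟨p.1.1, p.2.1.1, rfl⟩, ⟨p.1.2, p.2.1.2, rfl⟩)⟩,
      fun x => ⟨(x.2.1.1, x.2.2.1), ⟨x.2.1.2.1, x.2.2.2.1⟩, ?_⟩, ?_, ?_⟩
    · have h := Finset.HasAntidiagonal.mem_antidiagonal.mp x.1.2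
      rw [x.2.1.2.2, x.2.2.2.2]
      exact h
    · rintro ⟨⟨a, b⟩, ⟨h1, h2⟩, h3⟩
      rfl
    · rintro ⟨⟨⟨i, j⟩, hij⟩, ⟨a, ha, hcl⟩, ⟨b, hb, hcl'⟩⟩
      dsimp only at hcl hcl'
      subst hcl
      subst hcl'
      rfl
  rw [Nat.card_congr E, nat_card_sigma]
  rw [← Finset.sum_attach (Finset.HasAntidiagonal.antidiagonal n)
    (fun ij => conjCount' Y ij.1 * conjCount' Y ij.2)]
  apply Finset.sum_congr rfl
  intro ij _
  rw [Nat.card_prod]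
  rfl

lemma twoB (hYsymm : ∀ y ∈ Y, y⁻¹ ∈ Y) (hYgen : Subgroup.closure Y = ⊤)
    (hYfin : Y.Finite) (n : ℕ) :
    2 * Nat.card {s : Sym2 (ConjClasses G) //
        lenS Y (.inr s) = n + 2 ∧ ¬ ConjClasses.mk (1:G) ∈ s}
      = Nat.card {p : ConjClasses G × ConjClasses G //
            (p.1 ≠ ConjClasses.mk (1:G) ∧ p.2 ≠ ConjClasses.mk (1:G)) ∧
              conjLen Y p.1 + conjLen Y p.2 = n}
        + Nat.card {c : ConjClasses G // c ≠ ConjClasses.mk (1:G) ∧ 2 * conjLen Y c = n} := by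
  classical
  letI := WellOrderingRel.isWellOrder (α := ConjClasses G)
  letI : LinearOrder (ConjClasses G) := linearOrderOfSTO WellOrderingRel
  set P : ConjClasses G × ConjClasses G → Prop :=
    fun p => (p.1 ≠ ConjClasses.mk (1:G) ∧ p.2 ≠ ConjClasses.mk (1:G)) ∧
      conjLen Y p.1 + conjLen Y p.2 = n with hPdef
  have hfinP : Finite {p : ConjClasses G × ConjClasses G // P p} := by
    have hsub : {p : ConjClasses G × ConjClasses G | P p} ⊆
        {c : ConjClasses G | conjLen Y c ≤ n} ×ˢ {c : ConjClasses G | conjLen Y c ≤ n} := by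
      rintro ⟨a, b⟩ ⟨-, hsum⟩
      dsimp only at hsum
      exact ⟨by simp only [Set.mem_setOf_eq]; omega, by simp only [Set.mem_setOf_eq]; omega⟩
    exact (Set.Finite.subset
      ((finite_conjLen_le Y hYsymm hYgen hYfin n).prod
        (finite_conjLen_le Y hYsymm hYgen hYfin n)) hsub).to_subtype
  have hQ : ∀ a b : ConjClasses G,
      (lenS Y (.inr (Sym2.mk a b)) = n + 2 ∧ ¬ ConjClasses.mk (1:G) ∈ Sym2.mk a b)
        ↔ P (a, b) := by
    intro a b
    constructor
    · rintro ⟨hlen, hmem⟩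
      rw [Sym2.mem_iff] at hmem
      push_neg at hmem
      have h1 : a ≠ ConjClasses.mk (1:G) := fun h => hmem.1 h.symm
      have h2 : b ≠ ConjClasses.mk (1:G) := fun h => hmem.2 h.symm
      have hp : pen a b = 2 := by simp [pen, h1, h2]
      rw [lenS_inr, hp] at hlen
      refine ⟨⟨h1, h2⟩, ?_⟩
      dsimp only
      omega
    · rintro ⟨⟨h1, h2⟩, hsum⟩
      dsimp only at hsum
      have hp : pen a b = 2 := by simp [pen, h1, h2]
      refine ⟨by rw [lenS_inr, hp]; omega, ?_⟩
      rw [Sym2.mem_iff]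
      push_neg
      exact ⟨fun h => h1 h.symm, fun h => h2 h.symm⟩
  have E : {s : Sym2 (ConjClasses G) //
        lenS Y (.inr s) = n + 2 ∧ ¬ ConjClasses.mk (1:G) ∈ s}
      ≃ {p : ConjClasses G × ConjClasses G // P p ∧ p.1 ≤ p.2} := by
    refine (Equiv.subtypeEquiv Sym2.sortEquiv (fun s => ?_)).trans
      ((Equiv.subtypeSubtypeEquivSubtypeInter
        (fun p : ConjClasses G × ConjClasses G => p.1 ≤ p.2) P).trans
        (Equiv.subtypeEquivRight (fun p => and_comm)))
    have hs : Sym2.mk ((Sym2.sortEquiv s : {p : ConjClasses G × ConjClasses G // p.1 ≤ p.2}) :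
        ConjClasses G × ConjClasses G).1 ((Sym2.sortEquiv s : {p : ConjClasses G × ConjClasses G // p.1 ≤ p.2}) :
        ConjClasses G × ConjClasses G).2 = s := Sym2.sortEquiv.symm_apply_apply s
    constructor
    · intro hq
      rw [← hs] at hq
      exact (hQ _ _).mp hq
    · intro hp
      rw [← hs]
      exact (hQ _ _).mpr hp
  have hfinPle : Finite {p : ConjClasses G × ConjClasses G // P p ∧ p.1 ≤ p.2} :=
    fin_of_sub _ _ (fun p h => h.1) hfinP
  have h1 := card_split P (fun p => p.1 ≤ p.2) hfinP
  have h2 := card_split (fun p : ConjClasses G × ConjClasses G => P p ∧ p.1 ≤ p.2)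
    (fun p => p.1 = p.2) hfinPle
  have heqD : Nat.card {p : ConjClasses G × ConjClasses G // (P p ∧ p.1 ≤ p.2) ∧ p.1 = p.2}
      = Nat.card {c : ConjClasses G // c ≠ ConjClasses.mk (1:G) ∧ 2 * conjLen Y c = n} := by
    apply Nat.card_congr
    refine ⟨fun x => ⟨x.1.1, x.2.1.1.1.1, ?_⟩,
      fun c => ⟨(c.1, c.1), ⟨⟨⟨c.2.1, c.2.1⟩, by
        have h' := c.2.2
        show conjLen Y (↑c) + conjLen Y (↑c) = n
        omega⟩, le_refl _⟩, rfl⟩, ?_, ?_⟩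
    · have hsum : conjLen Y (↑x : ConjClasses G × ConjClasses G).1
          + conjLen Y (↑x : ConjClasses G × ConjClasses G).2 = n := x.2.1.1.2
      have heq := congrArg (conjLen Y) x.2.2
      omega
    · rintro ⟨⟨a, b⟩, ⟨hP, hle⟩, (rfl : a = b)⟩
      rfl
    · rintro ⟨c, h1, h2⟩
      rfl
  have hswap : Nat.card {p : ConjClasses G × ConjClasses G // P p ∧ ¬ p.1 ≤ p.2}
      = Nat.card {p : ConjClasses G × ConjClasses G // (P p ∧ p.1 ≤ p.2) ∧ ¬ p.1 = p.2} := by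
    apply Nat.card_congr
    refine ⟨fun x => ⟨(x.1.2, x.1.1), ⟨⟨⟨x.2.1.1.2, x.2.1.1.1⟩, by
        have h' : conjLen Y (↑x : ConjClasses G × ConjClasses G).1
            + conjLen Y (↑x : ConjClasses G × ConjClasses G).2 = n := x.2.1.2
        show conjLen Y (↑x : ConjClasses G × ConjClasses G).2
            + conjLen Y (↑x : ConjClasses G × ConjClasses G).1 = n
        omega⟩,
        le_of_lt (not_le.mp x.2.2)⟩, ne_of_lt (not_le.mp x.2.2)⟩,
      fun x => ⟨(x.1.2, x.1.1), ⟨⟨x.2.1.1.1.2, x.2.1.1.1.1⟩, by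
        have h' : conjLen Y (↑x : ConjClasses G × ConjClasses G).1
            + conjLen Y (↑x : ConjClasses G × ConjClasses G).2 = n := x.2.1.1.2
        show conjLen Y (↑x : ConjClasses G × ConjClasses G).2
            + conjLen Y (↑x : ConjClasses G × ConjClasses G).1 = n
        omega⟩, ?_⟩,
      ?_, ?_⟩
    · have hlt := lt_of_le_of_ne x.2.1.2 x.2.2
      exact not_le.mpr hlt
    · rintro ⟨⟨a, b⟩, h⟩
      rfl
    · rintro ⟨⟨a, b⟩, h⟩
      rfl
  have h1' : Nat.card {p : ConjClasses G × ConjClasses G // P p}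
      = Nat.card {p : ConjClasses G × ConjClasses G // P p ∧ p.1 ≤ p.2}
        + Nat.card {p : ConjClasses G × ConjClasses G // P p ∧ ¬ p.1 ≤ p.2} := h1
  have h2' : Nat.card {p : ConjClasses G × ConjClasses G // P p ∧ p.1 ≤ p.2}
      = Nat.card {p : ConjClasses G × ConjClasses G // (P p ∧ p.1 ≤ p.2) ∧ p.1 = p.2}
        + Nat.card {p : ConjClasses G × ConjClasses G // (P p ∧ p.1 ≤ p.2) ∧ ¬ p.1 = p.2} := h2
  have key : 2 * Nat.card {p : ConjClasses G × ConjClasses G // P p ∧ p.1 ≤ p.2}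
      = Nat.card {p : ConjClasses G × ConjClasses G // P p}
        + Nat.card {c : ConjClasses G // c ≠ ConjClasses.mk (1:G) ∧ 2 * conjLen Y c = n} := by
    omega
  rw [Nat.card_congr E]
  exact key

lemma wrCount_decomp (hYsymm : ∀ y ∈ Y, y⁻¹ ∈ Y) (hYgen : Subgroup.closure Y = ⊤)
    (hYfin : Y.Finite) (m : ℕ) :
    wrC2ConjCount Y m
      = conjCount Y m
        + Nat.card {c : ConjClasses G // conjLen Y c + 1 = m}
        + Nat.card {s : Sym2 (ConjClasses G) //
            lenS Y (.inr s) = m ∧ ¬ ConjClasses.mk (1:G) ∈ s} := by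
  haveI hA : Finite {c : ConjClasses G // lenS Y (.inl c) = m} := by
    apply fin_of_sub (fun c : ConjClasses G => lenS Y (.inl c) = m)
      (fun c => conjLen Y c ≤ m) (fun c h => by simp only [lenS_inl] at h; omega)
    exact (finite_conjLen_le Y hYsymm hYgen hYfin m).to_subtype
  haveI hB : Finite {s : Sym2 (ConjClasses G) // lenS Y (.inr s) = m} :=
    finite_sym2_lenS Y hYsymm hYgen hYfin m
  rw [wrC2ConjCount_eq Y hYsymm hYgen m,
    Nat.card_congr (sumSubtypeEquiv (fun z : ConjClasses G ⊕ Sym2 (ConjClasses G) => lenS Y z = m)),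
    Nat.card_sum]
  have hA' : Nat.card {c : ConjClasses G // lenS Y (.inl c) = m}
      = Nat.card {c : ConjClasses G // conjLen Y c + 1 = m} :=
    Nat.card_congr (Equiv.subtypeEquivRight (fun c => by rw [lenS_inl]))
  have hB' : Nat.card {s : Sym2 (ConjClasses G) // lenS Y (.inr s) = m}
      = Nat.card {s : Sym2 (ConjClasses G) // lenS Y (.inr s) = m ∧ ConjClasses.mk (1:G) ∈ s}
        + Nat.card {s : Sym2 (ConjClasses G) //
            lenS Y (.inr s) = m ∧ ¬ ConjClasses.mk (1:G) ∈ s} :=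
    card_split (fun s : Sym2 (ConjClasses G) => lenS Y (.inr s) = m)
      (fun s => ConjClasses.mk (1:G) ∈ s) hB
  rw [hA', hB', card_sym2_one Y hYsymm hYgen hYfin m]
  omega

lemma card_T_succ (k : ℕ) :
    Nat.card {c : ConjClasses G // conjLen Y c + 1 = k + 1} = conjCount Y k :=
  Nat.card_congr (Equiv.subtypeEquivRight (fun c => by omega))

lemma card_T_zero :
    Nat.card {c : ConjClasses G // conjLen Y c + 1 = 0} = 0 := by
  haveI : IsEmpty {c : ConjClasses G // conjLen Y c + 1 = 0} := ⟨by rintro ⟨c, hc⟩; omega⟩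
  simp [Nat.card_of_isEmpty]

end Burnside

end Stmt16

open PowerSeries

/-- for a group `G` with finite symmetric generating set `Y`, the
conjugacy growth series of `G ≀ C₂` with respect to the natural generating set equals
`σ(z) + z·σ(z) + (z²/2)·((σ(z)-1)² + σ(z²) - 1)` where `σ` is the conjugacy growth
series of `(G, Y)`. -/
theorem stmt16 {G : Type*} [Group G] (Y : Set G) (hYfin : Y.Finite)
    (hYsymm : ∀ y ∈ Y, y⁻¹ ∈ Y) (hYgen : Subgroup.closure Y = ⊤) :
    (PowerSeries.mk fun m => (wrC2ConjCount Y m : ℚ))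
      = (PowerSeries.mk fun m => (conjCount Y m : ℚ))
        + PowerSeries.X * (PowerSeries.mk fun m => (conjCount Y m : ℚ))
        + (PowerSeries.C (R := ℚ) (1 / 2) * PowerSeries.X ^ 2) *
          (((PowerSeries.mk fun m => (conjCount Y m : ℚ)) - 1) ^ 2
            + (PowerSeries.mk fun m =>
                if 2 ∣ m then (conjCount Y (m / 2) : ℚ) else 0) - 1) := by
  classical
  apply PowerSeries.ext
  intro n
  rw [coeff_mk, map_add, map_add, coeff_mk]
  rcases eq_or_ne n 0 with rfl | hn0
  · rw [Stmt16.wrCount_decomp Y hYsymm hYgen hYfin 0, Stmt16.card_T_zero Y,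
      Stmt16.card_sym2_b_small Y 0 (by omega)]
    have hx : (coeff 0) (X * PowerSeries.mk fun m => (conjCount Y m : ℚ)) = 0 := by
      rw [PowerSeries.coeff_zero_eq_constantCoeff, map_mul, PowerSeries.constantCoeff_X, zero_mul]
    have ht : (coeff 0) ((PowerSeries.C (R := ℚ) (1 / 2) * PowerSeries.X ^ 2) *
        (((PowerSeries.mk fun m => (conjCount Y m : ℚ)) - 1) ^ 2
          + (PowerSeries.mk fun m =>
              if 2 ∣ m then (conjCount Y (m / 2) : ℚ) else 0) - 1)) = 0 := by
      rw [mul_assoc, coeff_C_mul, mul_comm (X ^ 2 : PowerSeries ℚ),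
        PowerSeries.coeff_mul_X_pow', if_neg (by omega), mul_zero]
    rw [hx, ht]
    push_cast
    ring
  rcases eq_or_ne n 1 with rfl | hn1
  · have hT : Nat.card {c : ConjClasses G // conjLen Y c + 1 = 1} = conjCount Y 0 :=
      Nat.card_congr (Equiv.subtypeEquivRight fun c => by omega)
    rw [Stmt16.wrCount_decomp Y hYsymm hYgen hYfin 1, hT,
      Stmt16.card_sym2_b_small Y 1 (by omega)]
    have hx : (coeff 1) (X * PowerSeries.mk fun m => (conjCount Y m : ℚ))
        = (conjCount Y 0 : ℚ) := by
      rw [show (1 : ℕ) = 0 + 1 from rfl, PowerSeries.coeff_succ_X_mul, coeff_mk]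
    have ht : (coeff 1) ((PowerSeries.C (R := ℚ) (1 / 2) * PowerSeries.X ^ 2) *
        (((PowerSeries.mk fun m => (conjCount Y m : ℚ)) - 1) ^ 2
          + (PowerSeries.mk fun m =>
              if 2 ∣ m then (conjCount Y (m / 2) : ℚ) else 0) - 1)) = 0 := by
      rw [mul_assoc, coeff_C_mul, mul_comm (X ^ 2 : PowerSeries ℚ),
        PowerSeries.coeff_mul_X_pow', if_neg (by omega), mul_zero]
    rw [hx, ht]
    push_cast
    ring
  obtain ⟨k, rfl⟩ : ∃ k, n = k + 2 := ⟨n - 2, by omega⟩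
  rw [Stmt16.wrCount_decomp Y hYsymm hYgen hYfin (k + 2)]
  have hT : Nat.card {c : ConjClasses G // conjLen Y c + 1 = k + 2} = conjCount Y (k + 1) :=
    Nat.card_congr (Equiv.subtypeEquivRight fun c => by omega)
  rw [hT]
  have hx : (coeff (k + 2)) (X * PowerSeries.mk fun m => (conjCount Y m : ℚ))
      = (conjCount Y (k + 1) : ℚ) := by
    rw [show k + 2 = (k + 1) + 1 from rfl, PowerSeries.coeff_succ_X_mul, coeff_mk]
  have hco : ∀ i : ℕ, (coeff i) ((PowerSeries.mk fun m => (conjCount Y m : ℚ)) - 1)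
      = (Stmt16.conjCount' Y i : ℚ) := by
    intro i
    rw [map_sub, coeff_mk, PowerSeries.coeff_one,
      Stmt16.conjCount_split Y hYsymm hYgen hYfin i]
    push_cast
    split_ifs with h <;> ring
  have hsum : (∑ p ∈ Finset.HasAntidiagonal.antidiagonal k,
      (coeff p.1) ((PowerSeries.mk fun m => (conjCount Y m : ℚ)) - 1)
        * (coeff p.2) ((PowerSeries.mk fun m => (conjCount Y m : ℚ)) - 1))
      = ∑ p ∈ Finset.HasAntidiagonal.antidiagonal k,
          (Stmt16.conjCount' Y p.1 : ℚ) * (Stmt16.conjCount' Y p.2 : ℚ) :=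
    Finset.sum_congr rfl (fun p _ => by rw [hco p.1, hco p.2])
  have ht : (coeff (k + 2)) ((PowerSeries.C (R := ℚ) (1 / 2) * PowerSeries.X ^ 2) *
      (((PowerSeries.mk fun m => (conjCount Y m : ℚ)) - 1) ^ 2
        + (PowerSeries.mk fun m =>
            if 2 ∣ m then (conjCount Y (m / 2) : ℚ) else 0) - 1))
      = (1 / 2) * ((∑ p ∈ Finset.HasAntidiagonal.antidiagonal k,
            (Stmt16.conjCount' Y p.1 : ℚ) * (Stmt16.conjCount' Y p.2 : ℚ))
          + (if 2 ∣ k then (conjCount Y (k / 2) : ℚ) else 0)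
          - (if k = 0 then (1 : ℚ) else 0)) := by
    rw [mul_assoc, coeff_C_mul, PowerSeries.coeff_X_pow_mul, map_sub, map_add, sq,
      PowerSeries.coeff_mul, coeff_mk, PowerSeries.coeff_one, hsum]
  rw [hx, ht]
  have h2B := Stmt16.twoB Y hYsymm hYgen hYfin k
  rw [Stmt16.O_eq Y hYsymm hYgen hYfin k, Stmt16.D_eq Y k] at h2B
  have h2B' : 2 * (Nat.card {s : Sym2 (ConjClasses G) //
        Stmt16.lenS Y (.inr s) = k + 2 ∧ ¬ ConjClasses.mk (1:G) ∈ s} : ℚ)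
      = (∑ p ∈ Finset.HasAntidiagonal.antidiagonal k,
            (Stmt16.conjCount' Y p.1 : ℚ) * (Stmt16.conjCount' Y p.2 : ℚ))
        + (if 2 ∣ k then (Stmt16.conjCount' Y (k / 2) : ℚ) else 0) := by
    exact_mod_cast h2B
  have hD : (if 2 ∣ k then (conjCount Y (k / 2) : ℚ) else 0) - (if k = 0 then (1:ℚ) else 0)
      = (if 2 ∣ k then (Stmt16.conjCount' Y (k / 2) : ℚ) else 0) := by
    by_cases hk : k = 0
    · subst hk
      rw [if_pos (dvd_zero 2), if_pos rfl, if_pos (dvd_zero 2), Nat.zero_div,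
        Stmt16.conjCount_split Y hYsymm hYgen hYfin 0, if_pos rfl]
      push_cast
      ring
    · rw [if_neg hk, sub_zero]
      by_cases hdvd : 2 ∣ k
      · rw [if_pos hdvd, if_pos hdvd]
        have hk2 : k / 2 ≠ 0 := by omega
        rw [Stmt16.conjCount_split Y hYsymm hYgen hYfin (k / 2), if_neg hk2]
        push_cast
        ring
      · rw [if_neg hdvd, if_neg hdvd]
  push_cast
  linarith [h2B', hD]
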